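/- For n ≥ l ≥ k ≥ 3, every k-uniform hypergraph on n vertices in which no family member of K_{l+1}^{(k)} occurs (i.e., there is no (l+1)-set L of vertices such that every pair of vertices of L is contained in some edge) has at most |T^{(k)}(n,l)| edges, where T^{(k)}(n,l) is the complete l-partite k-graph with almost equal parts. -/

import Mathlib

open Finset

/-- A `k`-uniform hypergraph: every edge has `k` vertices. -/
def IsUniform (k : ℕ) {V : Type*} (G : Finset (Finset V)) : Prop :=
  ∀ e ∈ G, e.card = k

/-- The Turán-type hypergraph `T^{(k)}(n,l)`: partition `Fin n` into `l` almost equal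
parts (residues mod `l`) and take all `k`-sets meeting each part in at most one vertex. -/
def turan (n l k : ℕ) : Finset (Finset (Fin n)) :=
  ((Finset.univ : Finset (Fin n)).powersetCard k).filter
    (fun e => (e.image (fun v : Fin n => v.val % l)).card = e.card)

/-- The complete `l`-partite `k`-graph determined by parts `P`. -/
def multipartite {n : ℕ} (k : ℕ) {l : ℕ} (P : Fin l → Finset (Fin n)) :
    Finset (Finset (Fin n)) :=
  ((Finset.univ : Finset (Fin n)).powersetCard k).filter (fun e => ∀ i, (e ∩ P i).card ≤ 1)

/-- `G` contains a (not necessarily induced) copy of the pattern `H`. -/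
def Contains {α β : Type*} [DecidableEq α] [DecidableEq β]
    (H : Finset (Finset α)) (G : Finset (Finset β)) : Prop :=
  ∃ φ : α → β, Set.InjOn φ ↑(H.sup id) ∧ ∀ e ∈ H, e.image φ ∈ G

/-- The `k`-graph `H_l^{(k)}`: the complete graph on core `{0,…,l-1}`, each edge
enlarged by a fresh set of `k-2` vertices, all enlarging sets pairwise disjoint
and disjoint from the core. -/
def Hgraph (k l : ℕ) : Finset (Finset ℕ) :=
  ((((Finset.range l) ×ˢ (Finset.range l)).filter (fun p => p.1 < p.2))).image
    (fun p => insert p.1 (insert p.2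
      ((Finset.range (k - 2)).image (fun r => l + (p.1 * l + p.2) * (k - 2) + r))))

/-- The complete `k`-graph on `k+1` vertices, as a pattern on `ℕ`. -/
def Kpattern (k : ℕ) : Finset (Finset ℕ) := (Finset.range (k + 1)).powersetCard k

/-- The Turán number for a family of patterns `𝓕`: the maximum number of edges of a
`k`-uniform hypergraph on `n` vertices containing no member of `𝓕`. -/
noncomputable def exFam (k : ℕ) (F : Set (Finset (Finset ℕ))) (n : ℕ) : ℕ :=
  sSup {m | ∃ G : Finset (Finset (Fin n)), IsUniform k G ∧
    (∀ H ∈ F, ¬ Contains H G) ∧ G.card = m}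

/-- Two hypergraphs on `Fin n` are `m`-close: some relabelling of the vertices makes the
symmetric difference of the edge sets have at most `m` edges. -/
def Close {n : ℕ} (G H : Finset (Finset (Fin n))) (m : ℝ) : Prop :=
  ∃ σ : Fin n ≃ Fin n, (((symmDiff (G.image (fun e => e.image σ)) H)).card : ℝ) ≤ m

/-- A family `F` of patterns with Turán density `p` is `s`-stable. -/
def Stable (k s : ℕ) (F : Set (Finset (Finset ℕ))) (p : ℝ) : Prop :=
  ∀ ε : ℝ, 0 < ε → ∃ δ : ℝ, 0 < δ ∧ ∃ n₀ : ℕ, ∀ n ≥ n₀,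
    ∀ G : Fin (s + 1) → Finset (Finset (Fin n)),
      (∀ i, IsUniform k (G i) ∧ (∀ H ∈ F, ¬ Contains H (G i)) ∧
        (p - δ) * (n.choose k : ℝ) ≤ ((G i).card : ℝ)) →
      ∃ i j, i ≠ j ∧ Close (G i) (G j) (ε * (n.choose k : ℝ))

/-- The `t`-blowup of a pattern on `ℕ`: each vertex `v` is replaced by the `t` copies
`v*t, …, v*t+t-1`, and each edge by all choices of one copy of each of its vertices. -/
def blowupN (F : Finset (Finset ℕ)) (t : ℕ) : Finset (Finset ℕ) :=
  F.biUnion (fun e => (Finset.univ : Finset ({x // x ∈ e} → Fin t)).image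
    (fun f => e.attach.image (fun x : {y // y ∈ e} => x.1 * t + (f x).1)))


def sz (n l i : ℕ) : ℕ := n / l + if i < n % l then 1 else 0

def tt (k l n : ℕ) : ℕ := ∑ S ∈ (Finset.range l).powersetCard k, ∏ i ∈ S, sz n l i

lemma sz_succ (n l r : ℕ) (hr : r < l) :
    sz (n+1) l r = sz n l r + if n % l = r then 1 else 0 := by
  have hl : 0 < l := by omega
  have hml : n % l < l := Nat.mod_lt n hl
  have hkey : (n+1) % l = (n % l + 1 % l) % l := Nat.add_mod n 1 l
  unfold sz
  by_cases hd : l ∣ (n+1)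
  · have h1 : (n+1) / l = n / l + 1 := Nat.succ_div_of_dvd hd
    have h2 : (n+1) % l = 0 := by obtain ⟨c, hc⟩ := hd; rw [hc]; exact Nat.mul_mod_right l c
    have h3 : n % l = l - 1 := by
      rcases Nat.eq_or_lt_of_le hl with h1l | h2l
      · omega
      · have h1m : 1 % l = 1 := Nat.mod_eq_of_lt (by omega)
        rw [h1m] at hkey
        by_contra hne
        have : n % l + 1 < l := by omega
        rw [Nat.mod_eq_of_lt this] at hkey
        omega
    rw [h1, h2, h3]
    split_ifs <;> omega
  · have h1 : (n+1) / l = n / l := by rw [Nat.succ_div, if_neg hd]; omega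
    have h2l : 2 ≤ l := by
      by_contra h
      exact hd (by rw [show l = 1 by omega]; exact one_dvd _)
    have h1m : 1 % l = 1 := Nat.mod_eq_of_lt (by omega)
    have hlt : n % l + 1 < l := by
      by_contra h
      apply hd
      have h3 : n % l = l - 1 := by omega
      have he : n % l + l * (n / l) = n := Nat.mod_add_div n l
      exact ⟨n / l + 1, by rw [Nat.mul_succ]; omega⟩
    have h2 : (n+1) % l = n % l + 1 := by rw [hkey, h1m, Nat.mod_eq_of_lt hlt]
    rw [h1, h2]
    split_ifs <;> omega

lemma sz_mono (n l r : ℕ) (hr : r < l) : sz n l r ≤ sz (n+1) l r := by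
  rw [sz_succ n l r hr]; omega

lemma sz_le_of_le {a b l r : ℕ} (hr : r < l) (h : a ≤ b) : sz a l r ≤ sz b l r := by
  induction b, h using Nat.le_induction with
  | base => exact le_rfl
  | succ b hb ih => exact le_trans ih (sz_mono b l r hr)

lemma sum_sz (n l : ℕ) (hl : 0 < l) : ∑ i ∈ range l, sz n l i = n := by
  unfold sz
  rw [Finset.sum_add_distrib, Finset.sum_const, card_range]
  have h0 : ∑ x ∈ range l, (if x < n % l then (1:ℕ) else 0) = ((range l).filter (fun x => x < n % l)).card := (Finset.card_filter _ _).symm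
  rw [h0]
  have h1 : (range l).filter (fun i => i < n % l) = range (n % l) := by
    ext x
    simp only [mem_filter, mem_range]
    constructor
    · rintro ⟨_, h⟩; exact h
    · intro h; exact ⟨lt_of_lt_of_le h (le_of_lt (Nat.mod_lt n hl)), h⟩
  rw [h1, card_range]
  have := Nat.div_add_mod n l
  simp only [smul_eq_mul]
  omega

lemma tt_zero (l n : ℕ) : tt 0 l n = 1 := by
  unfold tt
  rw [Finset.powersetCard_zero]
  simp

lemma tt_one (l n : ℕ) (hl : 0 < l) : tt 1 l n = n := by
  unfold tt
  rw [Finset.powersetCard_one, Finset.sum_map]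
  simp only [Function.Embedding.coeFn_mk, Finset.prod_singleton]
  exact sum_sz n l hl

lemma tt_le_of_le (k l : ℕ) {a b : ℕ} (h : a ≤ b) : tt k l a ≤ tt k l b := by
  apply Finset.sum_le_sum
  intro S hS
  apply Finset.prod_le_prod' -- maybe wrong name
  intro i hi
  have : i < l := by
    have := Finset.mem_powersetCard.mp hS |>.1 hi
    simpa using this
  exact sz_le_of_le this h

/-- number of residue-class members below n -/
lemma count_mod (n l r : ℕ) (hr : r < l) :
    ((range n).filter (fun x => x % l = r)).card = sz n l r := by
  induction n with
  | zero => simp [sz]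
  | succ n ih =>
    rw [Finset.range_add_one, Finset.filter_insert]
    rw [sz_succ n l r hr]
    by_cases h : n % l = r
    · rw [if_pos h, Finset.card_insert_of_notMem (by simp), ih, if_pos h]
    · rw [if_neg h, ih, if_neg h]; omega

lemma divmod_spec {l : ℕ} (q r : ℕ) (hr : r < l) : (l*q + r)/l = q ∧ (l*q + r)%l = r := by
  constructor
  · rw [Nat.add_comm, Nat.add_mul_div_left _ _ (by omega : 0 < l), Nat.div_eq_of_lt hr]; omega
  · rw [Nat.add_comm, Nat.add_mul_mod_self_left, Nat.mod_eq_of_lt hr]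

lemma m_eq (n l : ℕ) (hn : 1 ≤ n) (hl : 1 ≤ l) :
    sz n l ((n-1) % l) = (n-1)/l + 1 := by
  obtain ⟨n', rfl⟩ : ∃ n', n = n' + 1 := ⟨n - 1, by omega⟩
  simp only [Nat.add_sub_cancel]
  rw [sz_succ n' l (n' % l) (Nat.mod_lt _ (by omega)), if_pos rfl]
  unfold sz
  rw [if_neg (lt_irrefl _)]

lemma sz_pred_ne (n l i : ℕ) (hn : 1 ≤ n) (hi : i < l) (hne : i ≠ (n-1) % l) :
    sz (n-1) l i = sz n l i := by
  obtain ⟨n', rfl⟩ : ∃ n', n = n' + 1 := ⟨n - 1, by omega⟩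
  simp only [Nat.add_sub_cancel] at *
  rw [sz_succ n' l i hi, if_neg (fun h => hne h.symm)]; omega

lemma sz_pred_eq (n l : ℕ) (hn : 1 ≤ n) (hl : 1 ≤ l) :
    sz (n-1) l ((n-1) % l) + 1 = sz n l ((n-1) % l) := by
  obtain ⟨n', rfl⟩ : ∃ n', n = n' + 1 := ⟨n - 1, by omega⟩
  simp only [Nat.add_sub_cancel] at *
  rw [sz_succ n' l (n' % l) (Nat.mod_lt _ (by omega)), if_pos rfl]

lemma sz_shift (n l : ℕ) (hn : 1 ≤ n) (hl : 2 ≤ l) (i : ℕ) (hi : i < l - 1) :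
    sz (n - sz n l ((n-1) % l)) (l-1) i
      = sz n l (if i < (n-1) % l then i else i + 1) := by
  set q := (n-1)/l with hq
  set j := (n-1)%l with hjdef
  have hjl : j < l := Nat.mod_lt _ (by omega)
  have hm : sz n l j = q + 1 := m_eq n l hn (by omega)
  have hnform : n = l*q + j + 1 := by
    have h := Nat.div_add_mod (n-1) l
    rw [hq, hjdef]
    omega
  rw [hm]
  have hsub : n - (q + 1) = (l-1)*q + j := by
    have : (l-1)*q + q = l*q := by
      cases l with
      | zero => omega
      | succ l' => simp [Nat.succ_mul, Nat.succ_sub_one]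
    omega
  rw [hsub]
  by_cases hjcase : j < l - 1
  · -- (l-1)*q + j : / = q, % = j
    have hd := divmod_spec q j (l := l-1) hjcase
    unfold sz
    rw [hd.1, hd.2]
    -- n / l = q, n % l = j + 1  (since j + 1 < l)
    have hd2 := divmod_spec q (j+1) (l := l) (by omega)
    have hn1 : n / l = q := by rw [hnform, Nat.add_assoc, hd2.1]
    have hn2 : n % l = j + 1 := by rw [hnform, Nat.add_assoc, hd2.2]
    rw [hn1, hn2]
    split_ifs <;> omega
  · -- j = l - 1 : n % l = 0, n / l = q + 1; n - m = (q+1)(l-1)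
    have hj1 : j = l - 1 := by omega
    have hrw : (l-1)*q + j = (l-1)*(q+1) := by
      rw [Nat.mul_succ]; omega
    rw [hrw]
    have hd := divmod_spec (l := l-1) (q+1) 0 (by omega)
    simp only [Nat.add_zero] at hd
    have hd' : ((l-1)*(q+1))/(l-1) = q+1 ∧ ((l-1)*(q+1))%(l-1) = 0 := hd
    unfold sz
    rw [hd'.1, hd'.2]
    have hd2 := divmod_spec (l := l) (q+1) 0 (by omega)
    simp only [Nat.add_zero] at hd2
    have hnf2 : n = l*(q+1) := by rw [Nat.mul_succ]; omega
    have hn1 : n / l = q + 1 := by rw [hnf2, hd2.1]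
    have hn2 : n % l = 0 := by rw [hnf2, hd2.2]
    rw [hn1, hn2]
    have : i < j := by omega
    split_ifs <;> omega

lemma reindex_sum (n l k' : ℕ) (hn : 1 ≤ n) (hl : 2 ≤ l) :
    ∑ S ∈ ((range l).erase ((n-1)%l)).powersetCard k', ∏ i ∈ S, sz n l i
      = tt k' (l-1) (n - sz n l ((n-1)%l)) := by
  set j := (n-1)%l with hjdef
  have hjl : j < l := Nat.mod_lt _ (by omega)
  set ψ : ℕ → ℕ := fun i => if i < j then i else i + 1 with hψ
  set ψ' : ℕ → ℕ := fun x => if x < j then x else x - 1 with hψ'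
  have hψmem : ∀ i < l - 1, ψ i ∈ (range l).erase j := by
    intro i hi
    simp only [hψ, Finset.mem_erase, Finset.mem_range]
    split_ifs <;> omega
  have hψ'mem : ∀ x ∈ (range l).erase j, ψ' x < l - 1 := by
    intro x hx
    simp only [Finset.mem_erase, Finset.mem_range] at hx
    simp only [hψ']
    split_ifs <;> omega
  have hψinj : ∀ a b : ℕ, ψ a = ψ b → a = b := by
    intro a b
    simp only [hψ]
    split_ifs <;> omega
  have hinv1 : ∀ i, i < l - 1 → ψ' (ψ i) = i := by
    intro i hi
    simp only [hψ, hψ']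
    split_ifs <;> omega
  have hinv2 : ∀ x ∈ (range l).erase j, ψ (ψ' x) = x := by
    intro x hx
    simp only [Finset.mem_erase, Finset.mem_range] at hx
    simp only [hψ, hψ']
    split_ifs <;> omega
  unfold tt
  apply Finset.sum_nbij' (i := fun S => S.image ψ') (j := fun T => T.image ψ)
  · intro S hS
    rw [Finset.mem_powersetCard] at hS ⊢
    constructor
    · intro x hx
      rw [Finset.mem_image] at hx
      obtain ⟨a, ha, rfl⟩ := hx
      exact Finset.mem_range.mpr (hψ'mem a (hS.1 ha))
    · rw [Finset.card_image_of_injOn, hS.2]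
      intro a ha b hb hab
      rw [← hinv2 a (hS.1 ha), ← hinv2 b (hS.1 hb), hab]
  · intro T hT
    rw [Finset.mem_powersetCard] at hT ⊢
    constructor
    · intro x hx
      rw [Finset.mem_image] at hx
      obtain ⟨a, ha, rfl⟩ := hx
      exact hψmem a (Finset.mem_range.mp (hT.1 ha))
    · rw [Finset.card_image_of_injOn fun a _ b _ hab => hψinj a b hab, hT.2]
  · intro S hS
    rw [Finset.mem_powersetCard] at hS
    rw [Finset.image_image]
    ext x
    simp only [Finset.mem_image, Function.comp_apply]
    constructor
    · rintro ⟨a, ha, rfl⟩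
      rw [hinv2 a (hS.1 ha)]; exact ha
    · intro hx
      exact ⟨x, hx, hinv2 x (hS.1 hx)⟩
  · intro T hT
    rw [Finset.mem_powersetCard] at hT
    rw [Finset.image_image]
    ext x
    simp only [Finset.mem_image, Function.comp_apply]
    constructor
    · rintro ⟨a, ha, rfl⟩
      rw [hinv1 a (Finset.mem_range.mp (hT.1 ha))]; exact ha
    · intro hx
      exact ⟨x, hx, hinv1 x (Finset.mem_range.mp (hT.1 hx))⟩
  · intro S hS
    rw [Finset.mem_powersetCard] at hS
    rw [Finset.prod_image]
    · apply Finset.prod_congr rfl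
      intro x hx
      have hx' := hS.1 hx
      rw [← hinv2 x hx']
      rw [hinv1 (ψ' x) (hψ'mem x hx')]
      exact (sz_shift n l hn hl (ψ' x) (hψ'mem x hx')).symm
    · intro a ha b hb hab
      rw [← hinv2 a (hS.1 ha), ← hinv2 b (hS.1 hb), hab]

lemma tt_rec (k l n : ℕ) (hk : 1 ≤ k) (hl : 2 ≤ l) (hn : 1 ≤ n) :
    tt k l n = tt k l (n-1) + tt (k-1) (l-1) (n - sz n l ((n-1)%l)) := by
  have hri := reindex_sum n l (k-1) hn hl
  have hme := m_eq n l hn (by omega)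
  have hszpred := sz_pred_eq n l hn (by omega)
  have hspn : ∀ i, i < l → i ≠ (n-1)%l → sz (n-1) l i = sz n l i :=
    fun i hi hne => sz_pred_ne n l i hn hi hne
  generalize hjdef : (n-1) % l = j at hri hme hszpred hspn ⊢
  have hjl : j < l := by rw [← hjdef]; exact Nat.mod_lt _ (by omega)
  have hjmem : j ∈ range l := Finset.mem_range.mpr hjl
  -- generic split of tt k l a
  have split : ∀ a : ℕ, tt k l a
      = (∑ S ∈ ((range l).powersetCard k).filter (fun S => j ∉ S), ∏ i ∈ S, sz a l i)
        + sz a l j * (∑ S ∈ ((range l).erase j).powersetCard (k-1), ∏ i ∈ S, sz a l i) := by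
    intro a
    unfold tt
    rw [← Finset.sum_filter_add_sum_filter_not ((range l).powersetCard k) (fun S => j ∉ S)]
    congr 1
    rw [Finset.mul_sum]
    apply Finset.sum_nbij' (i := fun S => S.erase j) (j := fun T => insert j T)
    · intro S hS
      simp only [Finset.mem_filter, Finset.mem_powersetCard, not_not] at hS
      rw [Finset.mem_powersetCard]
      exact ⟨Finset.erase_subset_erase _ hS.1.1, by rw [Finset.card_erase_of_mem hS.2, hS.1.2]⟩
    · intro T hT
      rw [Finset.mem_powersetCard] at hT
      have hjT : j ∉ T := fun h => (Finset.mem_erase.mp (hT.1 h)).1 rfl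
      simp only [Finset.mem_filter, Finset.mem_powersetCard, not_not]
      refine ⟨⟨Finset.insert_subset hjmem (hT.1.trans (Finset.erase_subset _ _)), ?_⟩, Finset.mem_insert_self _ _⟩
      rw [Finset.card_insert_of_notMem hjT, hT.2]
      omega
    · intro S hS
      simp only [Finset.mem_filter, not_not] at hS
      exact Finset.insert_erase hS.2
    · intro T hT
      rw [Finset.mem_powersetCard] at hT
      exact Finset.erase_insert (fun h => (Finset.mem_erase.mp (hT.1 h)).1 rfl)
    · intro S hS
      simp only [Finset.mem_filter, not_not] at hS
      exact (Finset.mul_prod_erase S _ hS.2).symm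
  have e1 := split n
  have e2 := split (n-1)
  have congr1 : ∑ S ∈ ((range l).powersetCard k).filter (fun S => j ∉ S), ∏ i ∈ S, sz (n-1) l i
      = ∑ S ∈ ((range l).powersetCard k).filter (fun S => j ∉ S), ∏ i ∈ S, sz n l i := by
    apply Finset.sum_congr rfl
    intro S hS
    simp only [Finset.mem_filter, Finset.mem_powersetCard] at hS
    apply Finset.prod_congr rfl
    intro i hi
    exact hspn i (Finset.mem_range.mp (hS.1.1 hi)) (fun h => hS.2 (h ▸ hi))
  have congr2 : ∑ S ∈ ((range l).erase j).powersetCard (k-1), ∏ i ∈ S, sz (n-1) l i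
      = ∑ S ∈ ((range l).erase j).powersetCard (k-1), ∏ i ∈ S, sz n l i := by
    apply Finset.sum_congr rfl
    intro S hS
    rw [Finset.mem_powersetCard] at hS
    apply Finset.prod_congr rfl
    intro i hi
    have hmem := Finset.mem_erase.mp (hS.1 hi)
    exact hspn i (Finset.mem_range.mp hmem.2) hmem.1
  rw [congr1, congr2] at e2
  rw [e1, e2, ← hri, ← hszpred, Nat.succ_mul]
  omega

lemma count_trans {α β : Type*} [DecidableEq α] [DecidableEq β] (f : α → β) (A : Finset α)
    (S : Finset β) :
    ((A.powersetCard S.card).filter (fun e => e.image f = S)).card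
      = ∏ b ∈ S, (A.filter (fun a => f a = b)).card := by
  induction S using Finset.induction with
  | empty =>
    rw [Finset.card_empty, Finset.powersetCard_zero, Finset.prod_empty]
    rw [Finset.filter_singleton]
    simp
  | @insert b S hb ih =>
    rw [Finset.card_insert_of_notMem hb]
    have key : (A.powersetCard (S.card + 1)).filter (fun e => e.image f = insert b S)
        = (A.filter (fun a => f a = b)).biUnion (fun x =>
            ((A.powersetCard S.card).filter (fun e => e.image f = S)).image (insert x)) := by
      ext e
      simp only [Finset.mem_filter, Finset.mem_powersetCard, Finset.mem_biUnion, Finset.mem_image]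
      constructor
      · rintro ⟨⟨hsub, hcard⟩, himg⟩
        have hinj : Set.InjOn f e := by
          rw [← Finset.card_image_iff (s := e) (f := f), himg,
            Finset.card_insert_of_notMem hb, hcard]
        have hbmem : b ∈ e.image f := himg ▸ Finset.mem_insert_self b S
        obtain ⟨x, hxe, hfx⟩ := Finset.mem_image.mp hbmem
        refine ⟨x, ⟨hsub hxe, hfx⟩, e.erase x, ⟨⟨(Finset.erase_subset _ _).trans hsub, ?_⟩, ?_⟩,
          Finset.insert_erase hxe⟩
        · rw [Finset.card_erase_of_mem hxe, hcard]; omega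
        · ext y
          simp only [Finset.mem_image, Finset.mem_erase]
          constructor
          · rintro ⟨a, ⟨hax, hae⟩, rfl⟩
            have : f a ∈ insert b S := himg ▸ Finset.mem_image_of_mem f hae
            rcases Finset.mem_insert.mp this with h | h
            · exact absurd (hinj hae hxe (h.trans hfx.symm)) hax
            · exact h
          · intro hy
            have : y ∈ insert b S := Finset.mem_insert_of_mem hy
            obtain ⟨a, hae, rfl⟩ := Finset.mem_image.mp (himg ▸ this : y ∈ e.image f)
            exact ⟨a, ⟨fun h => hb (by rw [← hfx, ← h]; exact hy), hae⟩, rfl⟩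
      · rintro ⟨x, hx, e', ⟨⟨hsub, hcard⟩, himg⟩, rfl⟩
        have hxe' : x ∉ e' := fun h => hb (hx.2 ▸ himg ▸ Finset.mem_image_of_mem f h)
        refine ⟨⟨Finset.insert_subset hx.1 hsub, ?_⟩, ?_⟩
        · rw [Finset.card_insert_of_notMem hxe', hcard]
        · rw [Finset.image_insert, himg, hx.2]
    rw [key, Finset.card_biUnion, Finset.prod_insert hb, ← ih]
    · have : ∀ x ∈ A.filter (fun a => f a = b),
          (((A.powersetCard S.card).filter (fun e => e.image f = S)).image (insert x)).card
            = ((A.powersetCard S.card).filter (fun e => e.image f = S)).card := by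
        intro x hx
        rw [Finset.mem_filter] at hx
        apply Finset.card_image_of_injOn
        intro e1 h1 e2 h2 h12
        rw [Finset.mem_coe, Finset.mem_filter] at h1 h2
        have hx1 : x ∉ e1 := fun h => hb (hx.2 ▸ h1.2 ▸ Finset.mem_image_of_mem f h)
        have hx2 : x ∉ e2 := fun h => hb (hx.2 ▸ h2.2 ▸ Finset.mem_image_of_mem f h)
        rw [← Finset.erase_insert hx1, ← Finset.erase_insert hx2, h12]
      rw [Finset.sum_congr rfl this, Finset.sum_const, smul_eq_mul]
    · intro x hx y hy hxy
      simp only [Finset.disjoint_left, Finset.mem_image]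
      rintro e ⟨e1, he1, rfl⟩ ⟨e2, he2, heq⟩
      rw [Finset.mem_coe, Finset.mem_filter] at hx hy
      rw [Finset.mem_filter] at he1 he2
      have hx2 : x ∉ e2 := fun h => hb (hx.2 ▸ he2.2 ▸ Finset.mem_image_of_mem f h)
      have : x ∈ insert y e2 := heq ▸ Finset.mem_insert_self x e1
      rcases Finset.mem_insert.mp this with h | h
      · exact hxy h
      · exact hx2 h

lemma fiber_card (n l r : ℕ) (hr : r < l) :
    ((Finset.univ : Finset (Fin n)).filter (fun v : Fin n => v.val % l = r)).card
      = sz n l r := by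
  rw [← count_mod n l r hr]
  apply Finset.card_bij (fun v _ => v.val)
  · intro v hv
    rw [Finset.mem_filter] at hv ⊢
    exact ⟨Finset.mem_range.mpr v.isLt, hv.2⟩
  · intro v _ w _ h
    exact Fin.val_injective h
  · intro x hx
    rw [Finset.mem_filter, Finset.mem_range] at hx
    exact ⟨⟨x, hx.1⟩, Finset.mem_filter.mpr ⟨Finset.mem_univ _, hx.2⟩, rfl⟩

lemma turan_card (n l k : ℕ) (hl : 0 < l) : (turan n l k).card = tt k l n := by
  classical
  set f : Fin n → ℕ := fun v => v.val % l with hf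
  have key : turan n l k = ((range l).powersetCard k).biUnion
      (fun S => ((Finset.univ : Finset (Fin n)).powersetCard k).filter
        (fun e => e.image f = S)) := by
    ext e
    simp only [turan, Finset.mem_filter, Finset.mem_biUnion, Finset.mem_powersetCard]
    constructor
    · rintro ⟨⟨hsub, hcard⟩, himg⟩
      refine ⟨e.image f, ⟨?_, by rw [himg, hcard]⟩, ⟨hsub, hcard⟩, rfl⟩
      intro x hx
      obtain ⟨v, _, rfl⟩ := Finset.mem_image.mp hx
      exact Finset.mem_range.mpr (Nat.mod_lt _ hl)
    · rintro ⟨S, hS, ⟨hsub, hcard⟩, himg⟩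
      exact ⟨⟨hsub, hcard⟩, by rw [himg, hS.2, hcard]⟩
  rw [key, Finset.card_biUnion]
  · unfold tt
    apply Finset.sum_congr rfl
    intro S hS
    rw [Finset.mem_powersetCard] at hS
    rw [← hS.2, count_trans f Finset.univ S]
    apply Finset.prod_congr rfl
    intro r hr
    exact fiber_card n l r (Finset.mem_range.mp (hS.1 hr))
  · intro S hS T hT hST
    simp only [Finset.disjoint_left, Finset.mem_filter]
    rintro e ⟨_, h1⟩ ⟨_, h2⟩
    exact hST (h1 ▸ h2)

/-- number of k-cliques of a K_{l+1}-free graph is at most that of the Turán graph -/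
lemma clique_bound {α : Type*} [DecidableEq α] (r : α → α → Prop) [DecidableRel r]
    (hsym : ∀ x y, r x y → r y x) :
    ∀ (n : ℕ) (A : Finset α), A.card = n → ∀ k l : ℕ, 1 ≤ l →
    (∀ s ⊆ A, s.card = l + 1 → ¬ (∀ x ∈ s, ∀ y ∈ s, x ≠ y → r x y)) →
    ((A.powersetCard k).filter (fun s => ∀ x ∈ s, ∀ y ∈ s, x ≠ y → r x y)).card ≤ tt k l n := by
  intro n
  induction n using Nat.strong_induction_on with
  | _ n IH =>
  intro A hA k l hl hfree
  rcases Nat.eq_zero_or_pos k with rfl | hk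
  · -- k = 0
    calc ((A.powersetCard 0).filter _).card ≤ (A.powersetCard 0).card := Finset.card_filter_le _ _
    _ ≤ 1 := by rw [Finset.card_powersetCard, Nat.choose_zero_right]
    _ = tt 0 l n := (tt_zero l n).symm
  rcases Nat.lt_or_ge k (l+1) with hkl | hkl
  swap
  · -- k ≥ l+1 : no cliques at all
    have : ((A.powersetCard k).filter (fun s => ∀ x ∈ s, ∀ y ∈ s, x ≠ y → r x y)) = ∅ := by
      rw [Finset.eq_empty_iff_forall_notMem]
      intro s hs
      rw [Finset.mem_filter, Finset.mem_powersetCard] at hs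
      obtain ⟨t, hts, htcard⟩ := Finset.exists_subset_card_eq (show l + 1 ≤ s.card by omega)
      exact hfree t (hts.trans hs.1.1) htcard
        (fun x hx y hy hxy => hs.2 x (hts hx) y (hts hy) hxy)
    rw [this, Finset.card_empty]
    exact Nat.zero_le _
  rcases Nat.lt_or_ge n k with hnk | hnk
  · -- n < k : no k-subsets
    have : A.powersetCard k = ∅ := Finset.powersetCard_eq_empty.mpr (by omega)
    rw [this, Finset.filter_empty, Finset.card_empty]
    exact Nat.zero_le _
  rcases Nat.eq_or_lt_of_le hk with hk1 | hk2
  · -- k = 1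
    rw [← hk1]
    have : ((A.powersetCard 1).filter (fun s => ∀ x ∈ s, ∀ y ∈ s, x ≠ y → r x y))
        = A.powersetCard 1 := by
      apply Finset.filter_true_of_mem
      intro s hs
      rw [Finset.mem_powersetCard] at hs
      intro x hx y hy hxy
      obtain ⟨a, ha⟩ := Finset.card_eq_one.mp hs.2
      rw [ha, Finset.mem_singleton] at hx hy
      exact absurd (hx.trans hy.symm) hxy
    rw [this, Finset.card_powersetCard, hA, Nat.choose_one_right, tt_one l n hl]
  -- main case : 2 ≤ k ≤ l, k ≤ n
  have hl2 : 2 ≤ l := by omega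
  have hn1 : 1 ≤ n := by omega
  have hme := m_eq n l hn1 (by omega)
  set m := sz n l ((n-1)%l) with hmdef
  have hlm : l * (m - 1) ≤ n - 1 := by
    rw [hme]
    simp only [Nat.add_sub_cancel]
    exact Nat.mul_div_le (n-1) l
  -- there is a vertex of small degree
  have hmin : ∃ v ∈ A, (A.filter (fun x => x ≠ v ∧ r v x)).card + m ≤ n := by
    by_contra hbig
    push_neg at hbig
    -- greedily build an (l+1)-clique
    have greedy : ∀ jj : ℕ, jj ≤ l + 1 →
        ∃ C ⊆ A, C.card = jj ∧ (∀ x ∈ C, ∀ y ∈ C, x ≠ y → r x y) := by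
      intro jj
      induction jj with
      | zero => exact fun _ => ⟨∅, Finset.empty_subset _, Finset.card_empty, by simp⟩
      | succ jj ihj =>
        intro hjj
        obtain ⟨C, hCA, hCcard, hCcl⟩ := ihj (by omega)
        have hcompl : A.filter (fun x => ¬(x ∉ C ∧ ∀ v ∈ C, r v x))
            ⊆ C.biUnion (fun v => A.filter (fun x => ¬(x ≠ v ∧ r v x))) := by
          intro x hx
          rw [Finset.mem_filter] at hx
          push_neg at hx
          rw [Finset.mem_biUnion]
          by_cases hxC : x ∈ C
          · exact ⟨x, hxC, Finset.mem_filter.mpr ⟨hx.1, by simp⟩⟩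
          · obtain ⟨v, hv, hrv⟩ := hx.2 hxC
            exact ⟨v, hv, Finset.mem_filter.mpr ⟨hx.1, fun h => hrv h.2⟩⟩
        have hcomplcard : (A.filter (fun x => ¬(x ∉ C ∧ ∀ v ∈ C, r v x))).card
            ≤ jj * (m - 1) := by
          calc (A.filter (fun x => ¬(x ∉ C ∧ ∀ v ∈ C, r v x))).card
              ≤ (C.biUnion (fun v => A.filter (fun x => ¬(x ≠ v ∧ r v x)))).card :=
                Finset.card_le_card hcompl
            _ ≤ ∑ v ∈ C, (A.filter (fun x => ¬(x ≠ v ∧ r v x))).card :=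
                Finset.card_biUnion_le
            _ ≤ ∑ _v ∈ C, (m - 1) := by
                apply Finset.sum_le_sum
                intro v hv
                have h1 := Finset.card_filter_add_card_filter_not
                  (s := A) (p := fun x => x ≠ v ∧ r v x)
                have h2 := hbig v (hCA hv)
                omega
            _ = jj * (m - 1) := by rw [Finset.sum_const, hCcard, smul_eq_mul]
        have hSne : (A.filter (fun x => x ∉ C ∧ ∀ v ∈ C, r v x)).Nonempty := by
          rw [← Finset.card_pos]
          have h3 : jj * (m-1) ≤ l * (m-1) := Nat.mul_le_mul_right _ (by omega)
          have h4 : (A.filter (fun x => ¬(x ∉ C ∧ ∀ v ∈ C, r v x))).card ≤ n - 1 :=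
            le_trans hcomplcard (le_trans h3 hlm)
          have hunion : A ⊆ (A.filter (fun x => x ∉ C ∧ ∀ v ∈ C, r v x))
              ∪ (A.filter (fun x => ¬(x ∉ C ∧ ∀ v ∈ C, r v x))) := by
            intro x hx
            rw [Finset.mem_union, Finset.mem_filter, Finset.mem_filter]
            by_cases hP : x ∉ C ∧ ∀ v ∈ C, r v x
            · exact Or.inl ⟨hx, hP⟩
            · exact Or.inr ⟨hx, hP⟩
          have h5 : n ≤ (A.filter (fun x => x ∉ C ∧ ∀ v ∈ C, r v x)).card
              + (A.filter (fun x => ¬(x ∉ C ∧ ∀ v ∈ C, r v x))).card := by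
            rw [← hA]
            exact le_trans (Finset.card_le_card hunion) (Finset.card_union_le _ _)
          omega
        obtain ⟨x, hx⟩ := hSne
        rw [Finset.mem_filter] at hx
        refine ⟨insert x C, Finset.insert_subset hx.1 hCA, ?_, ?_⟩
        · rw [Finset.card_insert_of_notMem hx.2.1, hCcard]
        · intro a ha b hb hab
          rw [Finset.mem_insert] at ha hb
          rcases ha with rfl | ha <;> rcases hb with rfl | hb
          · exact absurd rfl hab
          · exact hsym _ _ (hx.2.2 b hb)
          · exact hx.2.2 a ha
          · exact hCcl a ha b hb hab
    obtain ⟨C, hCA, hCcard, hCcl⟩ := greedy (l+1) le_rfl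
    exact hfree C hCA hCcard hCcl
  obtain ⟨v, hvA, hvdeg⟩ := hmin
  set N := A.filter (fun x => x ≠ v ∧ r v x) with hNdef
  have hNsub : N ⊆ A.erase v := by
    intro x hx
    rw [hNdef, Finset.mem_filter] at hx
    exact Finset.mem_erase.mpr ⟨hx.2.1, hx.1⟩
  have herase : (A.erase v).card = n - 1 := by rw [Finset.card_erase_of_mem hvA, hA]
  have hsplit := Finset.card_filter_add_card_filter_not
    (s := (A.powersetCard k).filter (fun s => ∀ x ∈ s, ∀ y ∈ s, x ≠ y → r x y))
    (p := fun s => v ∈ s)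
  -- cliques avoiding v
  have hB1 : (((A.powersetCard k).filter (fun s => ∀ x ∈ s, ∀ y ∈ s, x ≠ y → r x y)).filter
      (fun s => ¬ v ∈ s)).card ≤ tt k l (n-1) := by
    have hsub1 : ((A.powersetCard k).filter (fun s => ∀ x ∈ s, ∀ y ∈ s, x ≠ y → r x y)).filter
        (fun s => ¬ v ∈ s) ⊆ ((A.erase v).powersetCard k).filter
          (fun s => ∀ x ∈ s, ∀ y ∈ s, x ≠ y → r x y) := by
      intro s hs
      simp only [Finset.mem_filter, Finset.mem_powersetCard] at hs ⊢
      exact ⟨⟨fun x hx => Finset.mem_erase.mpr ⟨fun h => hs.2 (h ▸ hx), hs.1.1.1 hx⟩,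
        hs.1.1.2⟩, hs.1.2⟩
    refine le_trans (Finset.card_le_card hsub1) ?_
    exact IH (n-1) (by omega) (A.erase v) herase k l hl
      (fun s hsA hsc => hfree s (hsA.trans (Finset.erase_subset _ _)) hsc)
  -- cliques through v
  have hB2 : (((A.powersetCard k).filter (fun s => ∀ x ∈ s, ∀ y ∈ s, x ≠ y → r x y)).filter
      (fun s => v ∈ s)).card ≤ tt (k-1) (l-1) (n-m) := by
    have hinj : Set.InjOn (fun s : Finset α => s.erase v)
        ((((A.powersetCard k).filter (fun s => ∀ x ∈ s, ∀ y ∈ s, x ≠ y → r x y)).filter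
          (fun s => v ∈ s)) : Set (Finset α)) := by
      intro s1 h1 s2 h2 h12
      rw [Finset.mem_coe, Finset.mem_filter] at h1 h2
      rw [← Finset.insert_erase h1.2, ← Finset.insert_erase h2.2]
      simp only at h12
      rw [h12]
    rw [← Finset.card_image_of_injOn hinj]
    have hsub2 : ((((A.powersetCard k).filter (fun s => ∀ x ∈ s, ∀ y ∈ s, x ≠ y → r x y)).filter
        (fun s => v ∈ s))).image (fun s => s.erase v)
        ⊆ (N.powersetCard (k-1)).filter (fun s => ∀ x ∈ s, ∀ y ∈ s, x ≠ y → r x y) := by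
      intro t ht
      rw [Finset.mem_image] at ht
      obtain ⟨s, hs, rfl⟩ := ht
      simp only [Finset.mem_filter, Finset.mem_powersetCard] at hs ⊢
      refine ⟨⟨?_, by rw [Finset.card_erase_of_mem hs.2, hs.1.1.2]⟩,
        fun x hx y hy hxy => hs.1.2 x (Finset.erase_subset _ _ hx) y (Finset.erase_subset _ _ hy) hxy⟩
      intro x hx
      rw [Finset.mem_erase] at hx
      rw [hNdef, Finset.mem_filter]
      exact ⟨hs.1.1.1 hx.2, hx.1, hs.1.2 v hs.2 x hx.2 (fun h => hx.1 h.symm)⟩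
    refine le_trans (Finset.card_le_card hsub2) ?_
    have hNcard : N.card ≤ n - 1 := herase ▸ Finset.card_le_card hNsub
    have hfreeN : ∀ s ⊆ N, s.card = (l-1) + 1 → ¬(∀ x ∈ s, ∀ y ∈ s, x ≠ y → r x y) := by
      intro t htN htc hPt
      have hvt : v ∉ t := fun h => ((Finset.mem_filter.mp (htN h)).2.1) rfl
      apply hfree (insert v t) (Finset.insert_subset hvA
        (htN.trans ((Finset.filter_subset _ _))))
      · rw [Finset.card_insert_of_notMem hvt, htc]; omega
      · intro x hx y hy hxy
        rw [Finset.mem_insert] at hx hy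
        have hrv : ∀ z ∈ t, r v z := fun z hz => (Finset.mem_filter.mp (htN hz)).2.2
        rcases hx with rfl | hx <;> rcases hy with rfl | hy
        · exact absurd rfl hxy
        · exact hrv y hy
        · exact hsym _ _ (hrv x hx)
        · exact hPt x hx y hy hxy
    refine le_trans (IH N.card (by omega) N rfl (k-1) (l-1) (by omega) hfreeN) ?_
    exact tt_le_of_le (k-1) (l-1) (by omega)
  have hrec := tt_rec k l n (by omega) hl2 hn1
  rw [← hmdef] at hrec
  omega

/-- for `n ≥ l ≥ k ≥ 3`, every `k`-uniform hypergraph on `n` vertices with no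
`(l+1)`-set all of whose pairs are covered by edges has at most `|T^(k)(n,l)|` edges. -/
theorem stmt0 (n l k : ℕ) (hk : 3 ≤ k) (hl : k ≤ l) (hn : l ≤ n)
    (G : Finset (Finset (Fin n))) (hG : IsUniform k G)
    (hfree : ¬ ∃ L : Finset (Fin n), L.card = l + 1 ∧ ∀ x ∈ L, ∀ y ∈ L, x ≠ y → ∃ e ∈ G, x ∈ e ∧ y ∈ e) :
    G.card ≤ (turan n l k).card := by
  have hsym : ∀ x y : Fin n, (∃ e ∈ G, x ∈ e ∧ y ∈ e) → (∃ e ∈ G, y ∈ e ∧ x ∈ e) :=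
    fun x y ⟨e, he, hx, hy⟩ => ⟨e, he, hy, hx⟩
  have hsub : G ⊆ ((Finset.univ : Finset (Fin n)).powersetCard k).filter
      (fun s => ∀ x ∈ s, ∀ y ∈ s, x ≠ y → ∃ e ∈ G, x ∈ e ∧ y ∈ e) := by
    intro e he
    rw [Finset.mem_filter, Finset.mem_powersetCard]
    exact ⟨⟨Finset.subset_univ e, hG e he⟩, fun x hx y hy _ => ⟨e, he, hx, hy⟩⟩
  have hfree' : ∀ s ⊆ (Finset.univ : Finset (Fin n)), s.card = l + 1 →
      ¬(∀ x ∈ s, ∀ y ∈ s, x ≠ y → ∃ e ∈ G, x ∈ e ∧ y ∈ e) :=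
    fun s _ hsc hP => hfree ⟨s, hsc, hP⟩
  calc G.card ≤ _ := Finset.card_le_card hsub
    _ ≤ tt k l n := by
        have h := clique_bound (fun x y => ∃ e ∈ G, x ∈ e ∧ y ∈ e) hsym n Finset.univ
          (by simp) k l (by omega) hfree'
        convert h using 3
    _ = (turan n l k).card := (turan_card n l k (by omega)).symm
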